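/- Clock correctness: in the compiled problem, if action ā^⊢ for durative action a is executed at time t_s (setting clock_a := 0 and running_a := true), the process p̄_a increases clock_a with derivative 1 while running_a holds, and ā^⊣ is executed at time t_e > t_s with no intervening execution of ā^⊢, then at the time of ā^⊣ the value of clock_a equals t_e − t_s; hence the precondition lb(a) ≤ clock_a ≤ ub(a) of ā^⊣ implies lb(a) ≤ t_e − t_s ≤ ub(a). -/
import Mathlib

/-- Clock correctness: if `clock_a` is reset to `0` at step `j_s = t_s / δ`,
`running_a` holds from step `j_s` up to step `j_e = t_e / δ`, and the process
`p̄_a` adds `δ` to the clock at every step transition while `running_a` holds,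
then at step `j_e` the clock equals `t_e - t_s`; hence the duration-bound
precondition `lb ≤ clock_a ≤ ub` of `ā^⊣` implies `lb ≤ t_e - t_s ≤ ub`. -/
theorem stmt_10 (δ : ℚ) (hδ : 0 < δ) (js je : ℕ) (hle : js ≤ je)
    (clock : ℕ → ℚ) (running : ℕ → Prop)
    (h0 : clock js = 0)
    (hrun : ∀ j, js ≤ j → j < je → running j)
    (hstep : ∀ j, js ≤ j → j < je → running j → clock (j + 1) = clock j + δ)
    (ts te lb ub : ℚ) (hts : ts = (js : ℚ) * δ) (hte : te = (je : ℚ) * δ) :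
    clock je = te - ts ∧
    (lb ≤ clock je → clock je ≤ ub → lb ≤ te - ts ∧ te - ts ≤ ub) := by
  have key : ∀ k, js + k ≤ je → clock (js + k) = (k : ℚ) * δ := by
    intro k
    induction k with
    | zero => intro _; simpa using h0
    | succ n ih =>
      intro h
      have hn : js + n < je := by omega
      have := hstep (js + n) (by omega) hn (hrun _ (by omega) hn)
      have : clock (js + (n + 1)) = clock (js + n) + δ := by
        simpa [Nat.add_assoc] using this
      rw [this, ih (by omega)]
      push_cast
      ring
  have h1 : clock je = ((je - js : ℕ) : ℚ) * δ := by
    have := key (je - js) (by omega)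
    rwa [Nat.add_sub_cancel' hle] at this
  have h2 : clock je = te - ts := by
    rw [h1, hte, hts, Nat.cast_sub hle]; ring
  exact ⟨h2, fun ha hb => ⟨h2 ▸ ha, h2 ▸ hb⟩⟩
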